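/- As formal power series over ℚ: ∑_{n≥0} V_n x^n = ∑_{n≥0} n! · x^n / (1+x)^{2n+1}, where V_n = ∑_{k=0}^{n} (-1)^k C(2n-k,k) (n-k)!. -/

import Mathlib

open Finset PowerSeries

/-- Touchard's formula for the `n`-th straight ménage number. -/
def Vm (n : ℕ) : ℚ :=
  ∑ k ∈ Finset.range (n + 1),
    (-1 : ℚ) ^ k * (Nat.choose (2 * n - k) k : ℚ) * ((n - k).factorial : ℚ)

lemma one_add_X_mul_aux (d : ℕ) :
    (PowerSeries.mk fun j => (-1 : ℚ) ^ j * (Nat.choose (d + j) d : ℚ)) *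
      (1 + PowerSeries.X) ^ (d + 1) = 1 := by
  have h := congrArg (rescale (-1 : ℚ)) (mk_add_choose_mul_one_sub_pow_eq_one ℚ d)
  rw [map_mul, map_pow, map_one, rescale_mk, map_sub, map_one, rescale_neg_one_X,
    sub_neg_eq_add] at h
  exact h

lemma inv_one_add_X_pow (d : ℕ) :
    ((1 + PowerSeries.X : PowerSeries ℚ))⁻¹ ^ (d + 1) =
      PowerSeries.mk fun j => (-1 : ℚ) ^ j * (Nat.choose (d + j) d : ℚ) := by
  have hc : constantCoeff (1 + PowerSeries.X : PowerSeries ℚ) ≠ 0 := by simp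
  have h1 : ((1 + PowerSeries.X : PowerSeries ℚ))⁻¹ ^ (d + 1) *
      (1 + PowerSeries.X) ^ (d + 1) = 1 := by
    rw [← mul_pow, PowerSeries.inv_mul_cancel _ hc, one_pow]
  have h2 := one_add_X_mul_aux d
  calc ((1 + PowerSeries.X : PowerSeries ℚ))⁻¹ ^ (d + 1)
      = ((1 + PowerSeries.X : PowerSeries ℚ))⁻¹ ^ (d + 1) *
        ((1 + PowerSeries.X) ^ (d + 1) *
          (PowerSeries.mk fun j => (-1 : ℚ) ^ j * (Nat.choose (d + j) d : ℚ))) := by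
        rw [mul_comm ((1 + PowerSeries.X : PowerSeries ℚ) ^ (d + 1)), h2, mul_one]
    _ = _ := by rw [← mul_assoc, h1, one_mul]

/-- `∑_{n≥0} V_n x^n = ∑_{n≥0} n! x^n/(1+x)^{2n+1}` as formal power series over `ℚ`.
The right-hand side is formally summable since its `n`-th summand is divisible by `x^n`;
its `x^m`-coefficient is the finite sum of the `x^m`-coefficients of the first `m+1`
summands, with `(1+x)⁻¹` the formal inverse of `1+x`. -/
theorem V_gf_eq :
    (PowerSeries.mk fun n => Vm n) =
      PowerSeries.mk (fun m =>
        ∑ n ∈ Finset.range (m + 1),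
          (n.factorial : ℚ) *
            PowerSeries.coeff m
              (PowerSeries.X ^ n * ((1 + PowerSeries.X : PowerSeries ℚ))⁻¹ ^ (2 * n + 1))) := by
  ext m
  rw [coeff_mk, coeff_mk, Vm]
  rw [← Finset.sum_range_reflect]
  simp only [Nat.add_sub_cancel]
  refine Finset.sum_congr rfl fun n hn => ?_
  have hnm : n ≤ m := Nat.lt_succ_iff.mp (Finset.mem_range.mp hn)
  rw [inv_one_add_X_pow (2 * n)]
  have hcoe := PowerSeries.coeff_X_pow_mul
    (PowerSeries.mk fun j => (-1 : ℚ) ^ j * (Nat.choose (2 * n + j) (2 * n) : ℚ)) n (m - n)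
  rw [Nat.sub_add_cancel hnm] at hcoe
  rw [hcoe, coeff_mk]
  have h1 : m - (m - n) = n := Nat.sub_sub_self hnm
  have h2 : 2 * m - (m - n) = 2 * n + (m - n) := by omega
  rw [h1, h2]
  have h3 : (2 * n + (m - n)).choose (2 * n) = (2 * n + (m - n)).choose (m - n) := by
    have h4 := Nat.choose_symm (n := 2 * n + (m - n)) (k := m - n) (by omega)
    rwa [Nat.add_sub_cancel] at h4
  rw [h3]
  ring
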